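/- The generating function G(t,s,z) for plane trees by old leaves (t), young leaves (s), and edges (z) equals (1 + z - sz - sqrt(1 - 2(1+s)z + (1 - 4t + 2s + s²)z²)) / (2z). -/

import Mathlib

/-- A plane tree: a root together with an ordered (possibly empty) list of subtrees. -/
inductive PlaneTree where
  | node : List PlaneTree → PlaneTree

namespace PlaneTree

/-- The number of edges of a plane tree. -/
def edges : PlaneTree → ℕ
  | node ts => (ts.attach.map (fun t => edges t.1 + 1)).sum
decreasing_by have := List.sizeOf_lt_of_mem t.2; simp at *; omega

/-- Indicator that a tree is a single vertex (i.e. the corresponding child is a leaf). -/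
def isLeafInd : PlaneTree → ℕ
  | node [] => 1
  | node (_ :: _) => 0

/-- The number of old leaves: leaves that are the leftmost child of their parent. -/
def oldLeaves : PlaneTree → ℕ
  | node [] => 0
  | node (t :: ts) =>
      isLeafInd t + oldLeaves t + (ts.attach.map (fun s => oldLeaves s.1)).sum
decreasing_by
  · simp; omega
  · have := List.sizeOf_lt_of_mem s.2; simp at *; omega

/-- The number of young leaves: leaves that are not the leftmost child of their parent. -/
def youngLeaves : PlaneTree → ℕ
  | node [] => 0
  | node (t :: ts) =>
      youngLeaves t + (ts.attach.map (fun s => isLeafInd s.1 + youngLeaves s.1)).sum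
decreasing_by
  · simp; omega
  · have := List.sizeOf_lt_of_mem s.2; simp at *; omega

theorem edges_node (ts : List PlaneTree) :
    (node ts).edges = (ts.map (fun c => c.edges + 1)).sum := by
  rw [edges, List.attach_map_val (l := ts) (f := fun c => c.edges + 1)]

theorem old_node_nil : (node []).oldLeaves = 0 := by rw [oldLeaves]
theorem young_node_nil : (node []).youngLeaves = 0 := by rw [youngLeaves]

theorem old_node_cons (c : PlaneTree) (ts : List PlaneTree) :
    (node (c :: ts)).oldLeaves
      = c.isLeafInd + c.oldLeaves + (ts.map oldLeaves).sum := by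
  rw [oldLeaves, List.attach_map_val (l := ts) (f := oldLeaves)]

theorem young_node_cons (c : PlaneTree) (ts : List PlaneTree) :
    (node (c :: ts)).youngLeaves
      = c.youngLeaves + (ts.map (fun s => s.isLeafInd + s.youngLeaves)).sum := by
  rw [youngLeaves, List.attach_map_val (l := ts) (f := fun s => s.isLeafInd + s.youngLeaves)]

theorem ind' {P : PlaneTree → Prop} (h : ∀ ts, (∀ c ∈ ts, P c) → P (node ts)) :
    ∀ T, P T
  | node ts => h ts (fun c hc => ind' h c)
decreasing_by have := List.sizeOf_lt_of_mem hc; simp at *; omega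

end PlaneTree

open MvPolynomial

/-- The coefficients of the trivariate generating function `G(t,s,z)` for plane trees. -/
noncomputable def treeGF : PowerSeries (MvPolynomial (Fin 2) ℚ) :=
  PowerSeries.mk fun n =>
    ∑ i ∈ Finset.range (n + 1), ∑ j ∈ Finset.range (n + 1),
      (Nat.card {T : PlaneTree // T.edges = n ∧ T.oldLeaves = i ∧ T.youngLeaves = j} :
          MvPolynomial (Fin 2) ℚ) * X 0 ^ i * X 1 ^ j

open List in
theorem finite_bounded_lists {α : Type*} {s : Set α} (hs : s.Finite) :
    ∀ n : ℕ, {l : List α | l.length ≤ n ∧ ∀ x ∈ l, x ∈ s}.Finite := by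
  intro n
  induction n with
  | zero =>
      apply Set.Finite.subset (Set.finite_singleton ([] : List α))
      rintro l ⟨hl, -⟩; simpa using hl
  | succ n ih =>
      apply Set.Finite.subset
        ((Set.finite_singleton ([] : List α)).union
          ((hs.prod ih).image (fun p => p.1 :: p.2)))
      rintro l ⟨hl, hmem⟩
      cases l with
      | nil => exact Or.inl rfl
      | cons x l' =>
          refine Or.inr ⟨⟨x, l'⟩, ⟨hmem x (by simp), ?_, ?_⟩, rfl⟩
          · simpa using Nat.le_of_succ_le_succ hl
          · exact fun y hy => hmem y (by simp [hy])

namespace PlaneTree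

def children : PlaneTree → List PlaneTree
  | node ts => ts

theorem length_le_edges (ts : List PlaneTree) : ts.length ≤ (node ts).edges := by
  rw [edges_node]
  induction ts with
  | nil => simp
  | cons c cs ih => simp only [List.map_cons, List.sum_cons, List.length_cons]; omega

theorem edges_child_lt {c : PlaneTree} {ts : List PlaneTree} (h : c ∈ ts) :
    c.edges < (node ts).edges := by
  rw [edges_node]
  have : c.edges + 1 ∈ ts.map (fun c => c.edges + 1) := List.mem_map_of_mem h
  have := List.single_le_sum (fun x _ => Nat.zero_le x) _ this
  omega

theorem eq_nil_of_edges_eq_zero {T : PlaneTree} (h : T.edges = 0) : T = node [] := by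
  cases T with
  | node ts =>
    have := length_le_edges ts
    rw [h] at this
    simp [List.eq_nil_of_length_eq_zero (Nat.le_zero.mp this)]

theorem finite_edges_le (n : ℕ) : {T : PlaneTree | T.edges ≤ n}.Finite := by
  induction n with
  | zero =>
      apply Set.Finite.subset (Set.finite_singleton (node []))
      intro T hT
      simp only [Set.mem_setOf_eq, Nat.le_zero] at hT
      simp only [Set.mem_singleton_iff]
      exact eq_nil_of_edges_eq_zero hT
  | succ n ih =>
      apply Set.Finite.of_finite_image (f := children)
      · apply Set.Finite.subset (finite_bounded_lists ih (n+1))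
        rintro l ⟨T, hT, rfl⟩
        cases T with
        | node ts =>
          simp only [Set.mem_setOf_eq] at hT ⊢
          refine ⟨le_trans (length_le_edges ts) hT, fun c hc => ?_⟩
          have := edges_child_lt (show c ∈ ts from hc)
          omega
      · rintro ⟨ts⟩ - ⟨us⟩ - h
        simp only [children] at h
        rw [h]

theorem finite_edges_eq (n : ℕ) : {T : PlaneTree | T.edges = n}.Finite :=
  (finite_edges_le n).subset (fun T hT => le_of_eq hT)

instance (n : ℕ) : Finite {T : PlaneTree // T.edges = n} :=
  (finite_edges_eq n).to_subtype

instance (n i j : ℕ) :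
    Finite {T : PlaneTree // T.edges = n ∧ T.oldLeaves = i ∧ T.youngLeaves = j} := by
  apply Finite.of_injective
    (fun T => (⟨T.1, T.2.1⟩ : {T : PlaneTree // T.edges = n}))
  rintro ⟨T, hT⟩ ⟨U, hU⟩ h
  simpa using h

theorem isLeafInd_le_one (T : PlaneTree) : T.isLeafInd ≤ 1 := by
  cases T with | node us => cases us <;> simp [isLeafInd]

theorem sum_aux {cs : List PlaneTree}
    (h : ∀ x ∈ cs, x.oldLeaves + x.youngLeaves ≤ x.edges) :
    (cs.map oldLeaves).sum + (cs.map (fun s => s.isLeafInd + s.youngLeaves)).sum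
      ≤ (cs.map (fun c => c.edges + 1)).sum := by
  induction cs with
  | nil => simp
  | cons d ds ihd =>
    have hd := h d (by simp)
    have hdl := isLeafInd_le_one d
    have := ihd (fun x hx => h x (by simp [hx]))
    simp only [List.map_cons, List.sum_cons]
    omega

-- bounds
theorem leaves_le_edges (T : PlaneTree) : T.oldLeaves + T.youngLeaves ≤ T.edges := by
  induction T using ind' with
  | h ts ih =>
    cases ts with
    | nil => simp [old_node_nil, young_node_nil]
    | cons c cs =>
      rw [old_node_cons, young_node_cons, edges_node]
      have hc := ih c (by simp)
      have hil := isLeafInd_le_one c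
      have := sum_aux (cs := cs) (fun x hx => ih x (by simp [hx]))
      simp only [List.map_cons, List.sum_cons]
      omega

-- append lemmas
theorem edges_append (ts : List PlaneTree) (d : PlaneTree) :
    (node (ts ++ [d])).edges = (node ts).edges + d.edges + 1 := by
  simp [edges_node]; omega

theorem old_append (c : PlaneTree) (cs : List PlaneTree) (d : PlaneTree) :
    (node (c :: (cs ++ [d]))).oldLeaves = (node (c :: cs)).oldLeaves + d.oldLeaves := by
  simp [old_node_cons]; ring

theorem young_append (c : PlaneTree) (cs : List PlaneTree) (d : PlaneTree) :
    (node (c :: (cs ++ [d]))).youngLeaves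
      = (node (c :: cs)).youngLeaves + d.isLeafInd + d.youngLeaves := by
  simp [young_node_cons]; ring

end PlaneTree

noncomputable section
open scoped Classical
open MvPolynomial Finset

namespace PlaneTree

abbrev M := MvPolynomial (Fin 2) ℚ

def w (T : PlaneTree) : M := X 0 ^ T.oldLeaves * X 1 ^ T.youngLeaves

def E (n : ℕ) : Finset PlaneTree := (finite_edges_eq n).toFinset

theorem mem_E {T : PlaneTree} {n : ℕ} : T ∈ E n ↔ T.edges = n :=
  Set.Finite.mem_toFinset _

def f (n : ℕ) : M := ∑ T ∈ E n, w T
def fa (n : ℕ) : M := ∑ T ∈ E n, X 0 ^ T.isLeafInd * w T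
def fb (n : ℕ) : M := ∑ T ∈ E n, X 1 ^ T.isLeafInd * w T

theorem E_zero : E 0 = {node []} := by
  ext T
  simp only [mem_E, Finset.mem_singleton]
  constructor
  · exact eq_nil_of_edges_eq_zero
  · rintro rfl; rw [edges_node]; simp

theorem w_nil : w (node []) = 1 := by
  simp [w, old_node_nil, young_node_nil]

theorem f_zero : f 0 = 1 := by simp [f, E_zero, w_nil]
theorem fa_zero : fa 0 = X 0 := by simp [fa, E_zero, w_nil, isLeafInd]
theorem fb_zero : fb 0 = X 1 := by simp [fb, E_zero, w_nil, isLeafInd]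

theorem isLeafInd_eq_zero {T : PlaneTree} (h : T.edges ≠ 0) : T.isLeafInd = 0 := by
  cases T with
  | node ts =>
    cases ts with
    | nil => exact absurd (by rw [edges_node]; simp) h
    | cons c cs => simp [isLeafInd]

theorem fa_succ (n : ℕ) : fa (n+1) = f (n+1) := by
  refine Finset.sum_congr rfl fun T hT => ?_
  rw [isLeafInd_eq_zero (by rw [mem_E.mp hT]; omega), pow_zero, one_mul]

theorem fb_succ (n : ℕ) : fb (n+1) = f (n+1) := by
  refine Finset.sum_congr rfl fun T hT => ?_
  rw [isLeafInd_eq_zero (by rw [mem_E.mp hT]; omega), pow_zero, one_mul]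

def numChildren : PlaneTree → ℕ
  | node ts => ts.length

def appendChild : PlaneTree → PlaneTree → PlaneTree
  | node ts, d => node (ts ++ [d])

def initPart : PlaneTree → PlaneTree
  | node ts => node ts.dropLast

theorem numChildren_pos {T : PlaneTree} (h : T.edges ≠ 0) : 1 ≤ T.numChildren := by
  cases T with
  | node ts =>
    cases ts with
    | nil => exact absurd (by rw [edges_node]; simp) h
    | cons c cs => simp [numChildren]

theorem w_single (c : PlaneTree) : w (node [c]) = X 0 ^ c.isLeafInd * w c := by
  have h1 : (node [c]).oldLeaves = c.isLeafInd + c.oldLeaves := by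
    rw [old_node_cons]; simp
  have h2 : (node [c]).youngLeaves = c.youngLeaves := by
    rw [young_node_cons]; simp
  rw [w, h1, h2, w, pow_add]; ring

theorem w_appendChild (c : PlaneTree) (cs : List PlaneTree) (d : PlaneTree) :
    w (appendChild (node (c :: cs)) d) = w (node (c :: cs)) * (X 1 ^ d.isLeafInd * w d) := by
  rw [appendChild, List.cons_append, w, w, w, old_append, young_append, pow_add, pow_add, pow_add]
  ring

theorem sum_one_child (n : ℕ) :
    ∑ T ∈ (E (n+1)).filter (fun T => T.numChildren = 1), w T = fa n := by
  have himg : (E (n+1)).filter (fun T => T.numChildren = 1) = (E n).image (fun c => node [c]) := by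
    ext T
    simp only [Finset.mem_filter, Finset.mem_image, mem_E]
    constructor
    · rintro ⟨he, hn⟩
      cases T with
      | node ts =>
        match ts, hn with
        | [c], _ =>
          refine ⟨c, ?_, rfl⟩
          rw [edges_node] at he; simp at he; omega
    · rintro ⟨c, hc, rfl⟩
      constructor
      · rw [edges_node]; simp; omega
      · rfl
  rw [himg, Finset.sum_image (by rintro x - y - h; cases h; rfl)]
  exact Finset.sum_congr rfl fun c _ => w_single c

theorem sum_pair (n k : ℕ) (hk : k < n) :
    ∑ T ∈ ((E (n+1)).filter (fun T => 2 ≤ T.numChildren)).filter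
        (fun T => T.initPart.edges - 1 = k), w T
      = f (k+1) * fb (n - (k+1)) := by
  have himg : ((E (n+1)).filter (fun T => 2 ≤ T.numChildren)).filter
        (fun T => T.initPart.edges - 1 = k)
      = ((E (k+1)) ×ˢ (E (n - (k+1)))).image (fun p => appendChild p.1 p.2) := by
    ext T
    simp only [Finset.mem_filter, Finset.mem_image, Finset.mem_product, mem_E]
    constructor
    · rintro ⟨⟨he, hn⟩, hφ⟩
      cases T with
      | node ts =>
        rcases List.eq_nil_or_concat ts with rfl | ⟨ts', d, rfl⟩
        · simp [numChildren] at hn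
        · rw [List.concat_eq_append] at *
          have hlen : 1 ≤ ts'.length := by
            simp [numChildren] at hn; omega
          have hip : (node (ts' ++ [d])).initPart = node ts' := by
            rw [initPart, List.dropLast_concat]
          have heq := edges_append ts' d
          rw [he] at heq
          have hpos : 1 ≤ (node ts').edges :=
            le_trans hlen (length_le_edges ts')
          rw [hip] at hφ
          have he' : (node ts').edges = k + 1 := by omega
          refine ⟨⟨node ts', d⟩, ⟨he', ?_⟩, ?_⟩
          · dsimp only; omega
          · rw [appendChild]
    · rintro ⟨⟨T', d⟩, ⟨h1, h2⟩, rfl⟩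
      cases T' with
      | node ts' =>
        have hlen : 1 ≤ ts'.length := by
          by_contra h
          have : ts' = [] := List.eq_nil_of_length_eq_zero (by omega)
          subst this
          rw [edges_node] at h1; simp at h1
        have heq := edges_append ts' d
        dsimp only at h1 h2
        refine ⟨⟨?_, ?_⟩, ?_⟩
        · rw [appendChild, heq, h1, h2]; omega
        · rw [appendChild, numChildren]; simp; omega
        · rw [appendChild, initPart, List.dropLast_concat, h1]; omega
  rw [himg, Finset.sum_image, Finset.sum_product, f, fb, Finset.sum_mul_sum]
  · refine Finset.sum_congr rfl fun T' hT' => Finset.sum_congr rfl fun d hd => ?_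
    simp only [Finset.mem_product, mem_E] at hT'
    cases T' with
    | node ts' =>
      cases ts' with
      | nil => rw [edges_node] at hT'; simp at hT'
      | cons c cs => exact w_appendChild c cs d
  · rintro ⟨⟨ts1⟩, d1⟩ - ⟨⟨ts2⟩, d2⟩ - h
    simp only [appendChild] at h
    injection h with h
    obtain ⟨h1, h2⟩ := List.append_inj' h rfl
    simp at h2
    simp [h1, h2]

theorem f_rec (n : ℕ) :
    f (n+1) = fa n + ∑ k ∈ Finset.range n, f (k+1) * fb (n - (k+1)) := by
  rw [f, ← Finset.sum_filter_add_sum_filter_not (E (n+1)) (fun T => T.numChildren = 1) w]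
  congr 1
  · exact sum_one_child n
  · have hpred : (E (n+1)).filter (fun T => ¬ T.numChildren = 1)
        = (E (n+1)).filter (fun T => 2 ≤ T.numChildren) := by
      apply Finset.filter_congr
      intro T hT
      have := numChildren_pos (T := T) (by rw [mem_E.mp hT]; omega)
      constructor <;> omega
    rw [hpred]
    rw [← Finset.sum_fiberwise_of_maps_to (t := Finset.range n)
      (g := fun T => T.initPart.edges - 1) ?_ w]
    · exact Finset.sum_congr rfl fun k hk => sum_pair n k (Finset.mem_range.mp hk)
    · intro T hT
      simp only [Finset.mem_filter, mem_E] at hT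
      obtain ⟨he, hn⟩ := hT
      cases T with
      | node ts =>
        rcases List.eq_nil_or_concat ts with rfl | ⟨ts', d, rfl⟩
        · simp [numChildren] at hn
        · rw [List.concat_eq_append] at *
          have hlen : 1 ≤ ts'.length := by
            simp [numChildren] at hn; omega
          have hip : (node (ts' ++ [d])).initPart = node ts' := by
            rw [initPart, List.dropLast_concat]
          have heq := edges_append ts' d
          rw [he] at heq
          have hpos : 1 ≤ (node ts').edges :=
            le_trans hlen (length_le_edges ts')
          simp only [Finset.mem_range, hip]
          omega

theorem coeff_treeGF (n : ℕ) : PowerSeries.coeff n treeGF = f n := by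
  rw [treeGF, PowerSeries.coeff_mk]
  have hmap : ∀ T ∈ E n, (fun T => (T.oldLeaves, T.youngLeaves)) T
      ∈ Finset.range (n+1) ×ˢ Finset.range (n+1) := by
    intro T hT
    have h1 := leaves_le_edges T
    rw [mem_E.mp hT] at h1
    simp only [Finset.mem_product, Finset.mem_range]
    omega
  have h1 : f n = ∑ p ∈ Finset.range (n+1) ×ˢ Finset.range (n+1),
      ∑ T ∈ (E n).filter (fun T => (T.oldLeaves, T.youngLeaves) = p), w T :=
    (Finset.sum_fiberwise_of_maps_to hmap w).symm
  rw [h1, Finset.sum_product]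
  refine Finset.sum_congr rfl fun i _ => Finset.sum_congr rfl fun j _ => ?_
  have hcard : (Nat.card {T : PlaneTree // T.edges = n ∧ T.oldLeaves = i ∧ T.youngLeaves = j})
      = ((E n).filter (fun T => (T.oldLeaves, T.youngLeaves) = (i, j))).card := by
    rw [← Nat.card_eq_finsetCard]
    apply Nat.card_congr
    apply Equiv.subtypeEquivRight
    intro T
    simp only [Finset.mem_filter, mem_E, Prod.mk.injEq]
    try tauto
  rw [hcard]
  have hconst : ∀ T ∈ (E n).filter (fun T => (T.oldLeaves, T.youngLeaves) = (i, j)),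
      w T = X 0 ^ i * X 1 ^ j := by
    intro T hT
    simp only [Finset.mem_filter, Prod.mk.injEq] at hT
    rw [w, hT.2.1, hT.2.2]
  rw [Finset.sum_congr rfl hconst, Finset.sum_const, nsmul_eq_mul, mul_assoc]
  try push_cast
  try ring

theorem coeff_A (n : ℕ) :
    PowerSeries.coeff n (treeGF - 1 + PowerSeries.C (X 0)) = fa n := by
  cases n with
  | zero =>
      simp only [map_add, map_sub, coeff_treeGF, f_zero, fa_zero,
        PowerSeries.coeff_zero_eq_constantCoeff, map_one, PowerSeries.constantCoeff_C]
      try ring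
  | succ n =>
      simp only [map_add, map_sub, coeff_treeGF, fa_succ, PowerSeries.coeff_one,
        PowerSeries.coeff_C, Nat.succ_ne_zero, if_false]
      try ring

theorem coeff_B (n : ℕ) :
    PowerSeries.coeff n (treeGF - 1 + PowerSeries.C (X 1)) = fb n := by
  cases n with
  | zero =>
      simp only [map_add, map_sub, coeff_treeGF, f_zero, fb_zero,
        PowerSeries.coeff_zero_eq_constantCoeff, map_one, PowerSeries.constantCoeff_C]
      try ring
  | succ n =>
      simp only [map_add, map_sub, coeff_treeGF, fb_succ, PowerSeries.coeff_one,
        PowerSeries.coeff_C, Nat.succ_ne_zero, if_false]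
      try ring

theorem coeff_Cc (n : ℕ) :
    PowerSeries.coeff n (treeGF - 1) = if n = 0 then 0 else f n := by
  cases n with
  | zero =>
      simp [map_sub, coeff_treeGF, f_zero]
  | succ n =>
      simp [map_sub, coeff_treeGF, PowerSeries.coeff_one]

theorem key : treeGF = 1 + PowerSeries.X * (treeGF - 1 + PowerSeries.C (X 0))
    + PowerSeries.X * ((treeGF - 1) * (treeGF - 1 + PowerSeries.C (X 1))) := by
  refine PowerSeries.ext fun n => ?_
  cases n with
  | zero =>
      rw [coeff_treeGF, f_zero]
      simp [PowerSeries.coeff_zero_eq_constantCoeff]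
  | succ n =>
      rw [map_add, map_add, PowerSeries.coeff_succ_X_mul, PowerSeries.coeff_succ_X_mul,
        coeff_A, coeff_treeGF, PowerSeries.coeff_one, if_neg (Nat.succ_ne_zero n),
        PowerSeries.coeff_mul, f_rec]
      have : ∀ p ∈ Finset.HasAntidiagonal.antidiagonal n,
          PowerSeries.coeff p.1 (treeGF - 1)
            * PowerSeries.coeff p.2 (treeGF - 1 + PowerSeries.C (X 1))
          = (if p.1 = 0 then 0 else f p.1) * fb p.2 := by
        intro p _
        rw [coeff_Cc, coeff_B]
      rw [Finset.sum_congr rfl this, Finset.Nat.sum_antidiagonal_eq_sum_range_succ_mk,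
        Finset.sum_range_succ']
      simp

theorem main : ∃ S : PowerSeries M,
    S ^ 2 = 1 - 2 * (1 + PowerSeries.C (X 1)) * PowerSeries.X
        + (1 - 4 * PowerSeries.C (X 0) + 2 * PowerSeries.C (X 1)
            + PowerSeries.C (X 1) ^ 2) * PowerSeries.X ^ 2 ∧
    PowerSeries.constantCoeff S = 1 ∧
    2 * PowerSeries.X * treeGF
      = 1 + PowerSeries.X - PowerSeries.C (X 1) * PowerSeries.X - S := by
  refine ⟨1 + PowerSeries.X - PowerSeries.C (X 1) * PowerSeries.X
      - 2 * PowerSeries.X * treeGF, ?_, ?_, by ring⟩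
  · linear_combination (-4 * (PowerSeries.X : PowerSeries M)) * key
  · simp only [map_sub, map_add, map_mul, map_one, PowerSeries.constantCoeff_X,
      PowerSeries.constantCoeff_C, mul_zero, zero_mul]
    ring

end PlaneTree

end

/-- `G(t,s,z) = (1 + z - sz - √(1 - 2(1+s)z + (1-4t+2s+s²)z²)) / (2z)`, where the square
root is the unique power series `S` with `S² = 1 - 2(1+s)z + (1-4t+2s+s²)z²` and constant
term `1`; the division by `2z` is stated in cleared form `2z·G = 1 + z - sz - S`
(both sides have zero constant term, so this determines `G`). -/
theorem treeGF_closed_form :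
    letI t : PowerSeries (MvPolynomial (Fin 2) ℚ) := PowerSeries.C (X 0)
    letI s : PowerSeries (MvPolynomial (Fin 2) ℚ) := PowerSeries.C (X 1)
    letI z : PowerSeries (MvPolynomial (Fin 2) ℚ) := PowerSeries.X
    ∃ S : PowerSeries (MvPolynomial (Fin 2) ℚ),
      S ^ 2 = 1 - 2 * (1 + s) * z + (1 - 4 * t + 2 * s + s ^ 2) * z ^ 2 ∧
      PowerSeries.constantCoeff S = 1 ∧
      2 * z * treeGF = 1 + z - s * z - S := by
  exact PlaneTree.main
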